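/- Let Λ be a finite set, let c_n be a nonnegative integer for each n ∈ Λ, and suppose Λ is the disjoint union of two nonempty subsets S_1 and S_2 such that for all n ∈ S_1 and all m ∈ S_2 one has c_n − c_m ≥ Card(Λ). Then s(∑_{n∈Λ} 2^(c_n)) = s(∑_{n∈S_1} 2^(c_n)) + s(∑_{n∈S_2} 2^(c_n)). -/

import Mathlib

/-- `s n` is the number of nonzero digits (ones) in the binary expansion of `n`. -/
def s (n : ℕ) : ℕ := (Nat.digits 2 n).count 1

lemma s_add_pow_mul (a b k : ℕ) (hb : b < 2 ^ k) : s (b + 2 ^ k * a) = s b + s a := by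
  rcases Nat.eq_zero_or_pos a with rfl | ha
  · simp [s]
  have hlen : (Nat.digits 2 b).length ≤ k := by
    rcases Nat.eq_zero_or_pos b with rfl | hb0
    · simp
    · rw [Nat.digits_len 2 b (by norm_num) hb0.ne']
      exact Nat.log_lt_of_lt_pow hb0.ne' hb
  have h := Nat.digits_append_zeroes_append_digits (b := 2) (k := k - (Nat.digits 2 b).length)
    (m := a) (n := b) (by norm_num) ha
  rw [Nat.add_sub_cancel' hlen] at h
  unfold s
  rw [← h]
  simp [List.count_append, List.count_replicate]

theorem s_add_of_separated {α : Type*} [DecidableEq α]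
    (Λ S₁ S₂ : Finset α) (c : α → ℕ)
    (hS₁ : S₁.Nonempty) (hS₂ : S₂.Nonempty)
    (hdisj : Disjoint S₁ S₂) (hunion : S₁ ∪ S₂ = Λ)
    (hsep : ∀ n ∈ S₁, ∀ m ∈ S₂, (Λ.card : ℤ) ≤ (c n : ℤ) - (c m : ℤ)) :
    s (∑ n ∈ Λ, 2 ^ c n) = s (∑ n ∈ S₁, 2 ^ c n) + s (∑ n ∈ S₂, 2 ^ c n) := by
  obtain ⟨n₀, hn₀, hmin⟩ := S₁.exists_min_image c hS₁
  set K := c n₀ with hK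
  -- bound on c m for m ∈ S₂
  have hcm : ∀ m ∈ S₂, c m + Λ.card ≤ K := by
    intro m hm
    have := hsep n₀ hn₀ m hm
    omega
  have hcard2 : S₂.card ≤ Λ.card := by
    apply Finset.card_le_card
    rw [← hunion]; exact Finset.subset_union_right
  have hb : (∑ m ∈ S₂, 2 ^ c m) < 2 ^ K := by
    obtain ⟨m₀, hm₀⟩ := hS₂
    have hΛK : Λ.card ≤ K := le_trans (Nat.le_add_left _ _) (hcm m₀ hm₀)
    calc ∑ m ∈ S₂, 2 ^ c m ≤ ∑ _m ∈ S₂, 2 ^ (K - Λ.card) := by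
          apply Finset.sum_le_sum
          intro m hm
          exact Nat.pow_le_pow_right (by norm_num) (by have := hcm m hm; omega)
      _ = S₂.card * 2 ^ (K - Λ.card) := by rw [Finset.sum_const, smul_eq_mul]
      _ < 2 ^ Λ.card * 2 ^ (K - Λ.card) := by
          exact Nat.mul_lt_mul_of_lt_of_le (lt_of_le_of_lt hcard2 Nat.lt_two_pow_self)
            le_rfl (Nat.two_pow_pos _)
      _ = 2 ^ K := by rw [← pow_add]; congr 1; omega
  -- write the S₁ sum as 2^K * a
  have hKle : ∀ n ∈ S₁, K ≤ c n := fun n hn => hmin n hn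
  have ha : ∑ n ∈ S₁, 2 ^ c n = 2 ^ K * ∑ n ∈ S₁, 2 ^ (c n - K) := by
    rw [Finset.mul_sum]
    apply Finset.sum_congr rfl
    intro n hn
    rw [← pow_add]
    congr 1
    have := hKle n hn
    omega
  have hsplit : ∑ n ∈ Λ, 2 ^ c n = ∑ m ∈ S₂, 2 ^ c m + 2 ^ K * ∑ n ∈ S₁, 2 ^ (c n - K) := by
    rw [← hunion, Finset.sum_union hdisj, ha, Nat.add_comm]
  rw [hsplit, s_add_pow_mul _ _ _ hb, ha, ← Nat.zero_add (2 ^ K * _),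
    s_add_pow_mul _ 0 _ (Nat.two_pow_pos _)]
  simp [s, Nat.add_comm]
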